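/- For k odd and j ∈ {1,...,k−1}, the polynomials p_0(t) = t² − 2t − 1 and p_j(t) = t² − 2cos(2πj/k)t − 1 have no common root; indeed their resultant equals −4(1 − cos(2πj/k))² < 0. Consequently the two roots of p_0 are simple eigenvalues of the adjacency matrix of the k-sun, which therefore has exactly 2 simple eigenvalues, matching the bound r = 2 for the uniform automorphism of size k. -/

import Mathlib

open Matrix Polynomial

section KsunAux
open Kronecker Complex

lemma charpoly_conj_aux {n : Type*} [Fintype n] [DecidableEq n]
    {K : Type*} [Field K] (W A B : Matrix n n K) (hW : W.det ≠ 0)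
    (h : A * W = W * B) : A.charpoly = B.charpoly := by
  have hmul : charmatrix A * W.map C = W.map C * charmatrix B := by
    simp only [charmatrix, RingHom.mapMatrix_apply, sub_mul, mul_sub]
    rw [← Matrix.map_mul, ← Matrix.map_mul, h]
    congr 1
    exact (Matrix.scalar_commute (X : K[X]) (fun r => Commute.all _ r) (W.map C)).symm ▸ rfl
  have hdet : (W.map C).det = C W.det := (RingHom.map_det (C : K →+* K[X]) W).symm
  have hmain : A.charpoly * C W.det = C W.det * B.charpoly := by
    rw [← hdet, Matrix.charpoly, Matrix.charpoly, ← det_mul, ← det_mul, hmul]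
  have hC : (C W.det : K[X]) ≠ 0 := by simpa using hW
  rw [mul_comm] at hmain
  exact mul_left_cancel₀ hC hmain

lemma charpoly_blockDiagonal {o n : Type*} [Fintype o] [DecidableEq o] [Fintype n] [DecidableEq n]
    {R : Type*} [CommRing R] (M : o → Matrix n n R) :
    (blockDiagonal M).charpoly = ∏ j : o, (M j).charpoly := by
  have h : charmatrix (blockDiagonal M) = blockDiagonal (fun j => charmatrix (M j)) := by
    ext ⟨i, a⟩ ⟨i', a'⟩
    by_cases hii : (i, a) = (i', a')
    · rw [Prod.mk.injEq] at hii
      obtain ⟨rfl, rfl⟩ := hii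
      simp [blockDiagonal_apply]
    · rw [charmatrix_apply_ne _ _ _ hii]
      by_cases ha : a = a'
      · subst ha
        have hi : i ≠ i' := fun h => hii (by rw [h])
        simp [blockDiagonal_apply, charmatrix_apply_ne _ _ _ hi]
      · simp [blockDiagonal_apply, ha]
  rw [Matrix.charpoly, h, det_blockDiagonal]
  rfl

lemma ksun_charpoly (k : ℕ) [NeZero k] (hk3 : 3 ≤ k) (A : Matrix (Fin k × Fin 2) (Fin k × Fin 2) ℝ)
    (hA : ∀ (i i' : Fin k) (a b : Fin 2),
      A (i, a) (i', b) =
        (if i = i' ∧ a ≠ b then 1 else 0) +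
        (if a = 1 ∧ b = 1 ∧ (i' = i + 1 ∨ i = i' + 1) then 1 else 0)) :
    A.charpoly = ∏ j : Fin k, (X ^ 2 - C (2 * Real.cos (2 * Real.pi * j / k)) * X - 1) := by
  set ω : ℂ := Complex.exp (2 * Real.pi * Complex.I / k) with hω
  have hprim : IsPrimitiveRoot ω k := Complex.isPrimitiveRoot_exp k (by omega)
  have hωne : ω ≠ 0 := Complex.exp_ne_zero _
  have hpow : ∀ n : ℕ, ω ^ n = ω ^ (n % k) := by
    intro n
    conv_lhs => rw [← Nat.div_add_mod n k]
    rw [pow_add, pow_mul, hprim.pow_eq_one, one_pow, one_mul]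
  have hmod : ∀ a b : ℕ, a ≡ b [MOD k] → ω ^ a = ω ^ b := by
    intro a b hab
    rw [hpow a, hpow b]
    exact congrArg (ω ^ ·) hab
  have hval : ∀ m : Fin k, ((m + 1 : Fin k) : ℕ) ≡ (m : ℕ) + 1 [MOD k] := by
    intro m
    rw [Fin.add_def, Fin.val_one']
    calc ((m : ℕ) + 1 % k) % k ≡ (m : ℕ) + 1 % k [MOD k] := Nat.mod_modEq _ _
    _ ≡ (m : ℕ) + 1 [MOD k] := Nat.ModEq.add_left _ (Nat.mod_modEq _ _)
  have hstep : ∀ (m j : Fin k), ω ^ ((m : ℕ) * (j : ℕ)) * ω ^ (j : ℕ)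
      = ω ^ (((m + 1 : Fin k) : ℕ) * (j : ℕ)) := by
    intro m j
    rw [← pow_add]
    apply hmod
    calc (m : ℕ) * j + j = ((m : ℕ) + 1) * j := by ring
    _ ≡ ((m + 1 : Fin k) : ℕ) * j [MOD k] := ((hval m).symm).mul_right j
  have hc'real : ∀ j : Fin k, ω ^ (j : ℕ) + (ω ^ (j : ℕ))⁻¹
      = ((2 * Real.cos (2 * Real.pi * j / k) : ℝ) : ℂ) := by
    intro j
    have h1 : ω ^ (j : ℕ) = Complex.exp (((2 * Real.pi * j / k : ℝ) : ℂ) * Complex.I) := by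
      rw [hω, ← Complex.exp_nat_mul]
      congr 1
      have : (k : ℂ) ≠ 0 := Nat.cast_ne_zero.mpr (by omega)
      push_cast
      field_simp
    rw [h1, ← Complex.exp_neg, Complex.exp_mul_I, ← neg_mul, Complex.exp_mul_I]
    rw [Complex.cos_neg, Complex.sin_neg, ← Complex.ofReal_cos]
    push_cast
    ring
  -- blocks and transformation matrices
  set Mf : Fin k → Matrix (Fin 2) (Fin 2) ℂ :=
    (fun j : Fin k => !![0, 1; 1, ω ^ (j : ℕ) + (ω ^ (j : ℕ))⁻¹]) with hMf
  set B : Matrix (Fin k × Fin 2) (Fin k × Fin 2) ℂ :=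
    reindex (Equiv.prodComm (Fin 2) (Fin k)) (Equiv.prodComm (Fin 2) (Fin k)) (blockDiagonal Mf)
    with hB
  have hBapply : ∀ (i i' : Fin k) (a b : Fin 2),
      B (i, a) (i', b) = if i = i' then Mf i a b else 0 := by
    intro i i' a b
    by_cases h : i = i' <;> simp [hB, blockDiagonal_apply, h]
  set V : Matrix (Fin k) (Fin k) ℂ := vandermonde (fun i : Fin k => ω ^ (i : ℕ)) with hV
  have hVapply : ∀ i j : Fin k, V i j = ω ^ ((i : ℕ) * (j : ℕ)) := by
    intro i j; rw [hV, vandermonde_apply, ← pow_mul]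
  set W : Matrix (Fin k × Fin 2) (Fin k × Fin 2) ℂ := V ⊗ₖ (1 : Matrix (Fin 2) (Fin 2) ℂ)
    with hW
  have hWapply : ∀ (i j : Fin k) (a b : Fin 2),
      W (i, a) (j, b) = if a = b then V i j else 0 := by
    intro i j a b
    by_cases h : a = b <;> simp [hW, Matrix.kroneckerMap_apply, Matrix.one_apply, h]
  have hVdet : V.det ≠ 0 := by
    rw [hV, det_vandermonde_ne_zero_iff]
    intro x y hxy
    exact Fin.ext (hprim.pow_inj x.isLt y.isLt hxy)
  have hWdet : W.det ≠ 0 := by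
    rw [hW, det_kronecker]
    simp [hVdet]
  -- the conjugation identity
  have hcomm : (A.map (⇑Complex.ofRealHom)) * W = W * B := by
    have h2ne : (1 : Fin k) + 1 ≠ 0 := by
      intro h
      have h' : ((1 : Fin k) + 1).val = (0 : Fin k).val := congrArg Fin.val h
      rw [Fin.val_add, Fin.val_one', Fin.val_zero] at h'
      rw [Nat.mod_eq_of_lt (show 1 < k by omega)] at h'
      rw [Nat.mod_eq_of_lt (show 1 + 1 < k by omega)] at h'
      omega
    have hdisj : ∀ i : Fin k, i + 1 ≠ i - 1 := by
      intro i h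
      apply h2ne
      calc (1 : Fin k) + 1 = (i + 1) - (i - 1) := by abel
      _ = 0 := by rw [h, sub_self]
    have hV1 : ∀ i j : Fin k, V (i + 1) j = V i j * ω ^ (j : ℕ) := by
      intro i j; rw [hVapply, hVapply, hstep]
    have hV2 : ∀ i j : Fin k, V (i - 1) j = V i j * (ω ^ (j : ℕ))⁻¹ := by
      intro i j
      rw [eq_mul_inv_iff_mul_eq₀ (pow_ne_zero _ hωne),
        hVapply, hVapply, hstep, sub_add_cancel]
    have hsum2 : ∀ (a b : Fin k) (f : Fin k → ℂ), a ≠ b →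
        (∑ x : Fin k, if x = a then f x else if x = b then f x else 0) = f a + f b := by
      intro a b f hab
      have key : ∀ x : Fin k, (if x = a then f x else if x = b then f x else 0)
          = (if x = a then f x else 0) + (if x = b then f x else 0) := by
        intro x
        by_cases hxa : x = a
        · subst hxa; simp [hab]
        · simp [hxa]
      rw [Finset.sum_congr rfl (fun x _ => key x), Finset.sum_add_distrib]
      simp [Finset.sum_ite_eq']
    ext ⟨i, a⟩ ⟨j, b⟩
    rw [mul_apply, mul_apply, Fintype.sum_prod_type, Fintype.sum_prod_type]
    simp only [Fin.sum_univ_two, hWapply, hBapply, Matrix.map_apply, hA]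
    have horq : ∀ i' : Fin k, (i' = i + 1 ∨ i = i' + 1) ↔ (i' = i + 1 ∨ i' = i - 1) := by
      intro i'
      rw [eq_comm (a := i), ← eq_sub_iff_add_eq]
    fin_cases a <;> fin_cases b <;>
      [skip; skip; skip;
        (simp only [horq, map_add, apply_ite Complex.ofRealHom, _root_.map_one, map_zero];
         simp [ite_and, ite_or, Finset.sum_ite_eq, Finset.sum_ite_eq'];
         rw [hsum2 _ _ _ (hdisj i), hV1, hV2, hMf];
         simp [mul_add])] <;>
      simp [horq, hMf, apply_ite Complex.ofRealHom, ite_and,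
        Finset.sum_ite_eq, Finset.sum_ite_eq']
  -- assemble
  have hconj : (A.map (⇑Complex.ofRealHom)).charpoly = B.charpoly :=
    charpoly_conj_aux W _ B hWdet hcomm
  have hBcp : B.charpoly = ∏ j : Fin k, (Mf j).charpoly := by
    rw [hB, charpoly_reindex, charpoly_blockDiagonal]
  have hMfcp : ∀ j : Fin k, (Mf j).charpoly
      = X ^ 2 - C (ω ^ (j : ℕ) + (ω ^ (j : ℕ))⁻¹) * X - 1 := by
    intro j
    rw [Matrix.charpoly, Matrix.det_fin_two]
    simp [hMf, charmatrix_apply, Matrix.one_apply, Matrix.diagonal_apply]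
    ring
  apply Polynomial.map_injective Complex.ofRealHom Complex.ofReal_injective
  rw [← Matrix.charpoly_map, hconj, hBcp, Polynomial.map_prod]
  refine Finset.prod_congr rfl fun j _ => ?_
  rw [hMfcp j, hc'real j]
  simp [Polynomial.map_sub, Polynomial.map_pow, Polynomial.map_mul, Polynomial.map_one]

end KsunAux

/-- For `k` odd and `1 ≤ j ≤ k-1`, the polynomials `p₀ = t² - 2t - 1` and
`p_j = t² - 2cos(2πj/k)t - 1` have resultant (Sylvester determinant)
`-4(1 - cos(2πj/k))² < 0`, hence no common root.  Consequently the two roots of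
`p₀` are simple eigenvalues of the adjacency matrix of the `k`-sun, which has
exactly `2` simple eigenvalues, matching the bound `r = 2`. -/
theorem ksun_exactly_two_simple_eigenvalues
    (k : ℕ) [NeZero k] (hkodd : Odd k) (j : ℕ) (hj0 : 0 < j) (hjk : j < k)
    (c : ℝ) (hc : c = 2 * Real.cos (2 * Real.pi * j / k))
    (p₀ pj : Polynomial ℝ)
    (hp₀ : p₀ = X ^ 2 - Polynomial.C 2 * X - 1)
    (hpj : pj = X ^ 2 - Polynomial.C c * X - 1)
    (A : Matrix (Fin k × Fin 2) (Fin k × Fin 2) ℝ)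
    (hA : ∀ (i i' : Fin k) (a b : Fin 2),
      A (i, a) (i', b) =
        (if i = i' ∧ a ≠ b then 1 else 0) +
        (if a = 1 ∧ b = 1 ∧ (i' = i + 1 ∨ i = i' + 1) then 1 else 0)) :
    (!![1, -2, -1, 0; 0, 1, -2, -1; 1, -c, -1, 0; 0, 1, -c, -1] : Matrix (Fin 4) (Fin 4) ℝ).det =
        -4 * (1 - Real.cos (2 * Real.pi * j / k)) ^ 2 ∧
    -4 * (1 - Real.cos (2 * Real.pi * j / k)) ^ 2 < 0 ∧
    (∀ t : ℝ, ¬(p₀.eval t = 0 ∧ pj.eval t = 0)) ∧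
    (∀ t : ℝ, p₀.eval t = 0 → A.charpoly.roots.count t = 1) ∧
    (A.charpoly.roots.toFinset.filter
      (fun μ => A.charpoly.roots.count μ = 1)).card = 2 := by
  have hk3 : 3 ≤ k := by
    rcases hkodd with ⟨m, hm⟩
    omega
  -- the family of quadratics
  set q : Fin k → ℝ[X] :=
    (fun i : Fin k => X ^ 2 - C (2 * Real.cos (2 * Real.pi * i / k)) * X - 1) with hq
  have hcp : A.charpoly = ∏ i : Fin k, q i := ksun_charpoly k hk3 A hA
  have hπ := Real.pi_pos
  have hcos : ∀ m : Fin k, m ≠ 0 → Real.cos (2 * Real.pi * m / k) < 1 := by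
    intro m hm
    have hm0 : 0 < (m : ℕ) := by
      rcases Nat.eq_zero_or_pos (m : ℕ) with h | h
      · exact absurd (Fin.ext h) hm
      · exact h
    have hmk : ((m : ℕ) : ℝ) < k := by exact_mod_cast m.isLt
    have hk0 : (0 : ℝ) < k := by positivity
    have hx0 : 0 < 2 * Real.pi * m / k := by
      have : (0:ℝ) < (m : ℕ) := by exact_mod_cast hm0
      positivity
    have hx2 : 2 * Real.pi * m / k < 2 * Real.pi := by
      rw [div_lt_iff₀ hk0]
      have := Real.pi_pos
      nlinarith
    rcases lt_or_eq_of_le (Real.cos_le_one (2 * Real.pi * m / k)) with h | h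
    · exact h
    · exfalso
      have := (Real.cos_eq_one_iff_of_lt_of_lt (by linarith) hx2).mp h
      linarith
  have hmonic : ∀ i : Fin k, (q i).Monic := by
    intro i
    have heq : q i = X ^ 2 - (C (2 * Real.cos (2 * Real.pi * i / k)) * X + C 1) := by
      rw [hq]; rw [Polynomial.C_1]; ring
    rw [heq]
    exact monic_X_pow_sub (lt_of_le_of_lt (degree_linear_le) (by norm_num))
  have hqne : ∀ i : Fin k, q i ≠ 0 := fun i => (hmonic i).ne_zero
  have heval : ∀ (i : Fin k) (t : ℝ),
      (q i).eval t = t ^ 2 - 2 * Real.cos (2 * Real.pi * i / k) * t - 1 := by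
    intro i t; simp [hq]
  -- all roots of the quadratics are simple
  have hdeval : ∀ (i : Fin k) (t : ℝ),
      (derivative (q i)).eval t = 2 * t - 2 * Real.cos (2 * Real.pi * i / k) := by
    intro i t
    rw [hq]
    simp
    norm_num
  have hsimple : ∀ (i : Fin k) (t : ℝ), rootMultiplicity t (q i) ≤ 1 := by
    intro i t
    by_contra hcon
    push_neg at hcon
    have hroot : (q i).eval t = 0 :=
      (Polynomial.rootMultiplicity_pos (hqne i)).mp (by omega)
    have hdne : derivative (q i) ≠ 0 := by
      intro h0
      have h1 := hdeval i (Real.cos (2 * Real.pi * i / k) + 1)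
      rw [h0] at h1
      simp at h1
      linarith
    have h1 : 0 < rootMultiplicity t (derivative (q i)) := by
      rw [Polynomial.derivative_rootMultiplicity_of_root
        ((Polynomial.IsRoot.def).mpr hroot)]
      omega
    have hder : (derivative (q i)).eval t = 0 :=
      (Polynomial.rootMultiplicity_pos hdne).mp h1
    rw [hdeval] at hder
    rw [heval] at hroot
    have hd : 2 * Real.cos (2 * Real.pi * i / k) - 2 * t = 0 := by linarith
    have hcontra : -(t ^ 2) - 1 = 0 := by linear_combination hroot + t * hd
    nlinarith [sq_nonneg t]
  have hcount : ∀ (i : Fin k) (t : ℝ),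
      (q i).roots.count t = if (q i).eval t = 0 then 1 else 0 := by
    intro i t
    rw [Polynomial.count_roots]
    split_ifs with h
    · have h1 : 0 < rootMultiplicity t (q i) :=
        (Polynomial.rootMultiplicity_pos (hqne i)).mpr h
      have h2 := hsimple i t
      omega
    · exact Polynomial.rootMultiplicity_eq_zero h
  have hprodne : (∏ i : Fin k, q i) ≠ 0 := Finset.prod_ne_zero_iff.mpr fun i _ => hqne i
  have hcountA : ∀ t : ℝ, A.charpoly.roots.count t = ∑ i : Fin k, (q i).roots.count t := by
    intro t
    rw [hcp, Polynomial.roots_prod q Finset.univ hprodne, Multiset.count_bind]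
    rfl
  -- basic facts about the specific j
  have hjfin : ((⟨j, hjk⟩ : Fin k) : ℕ) = j := rfl
  have hjne : (⟨j, hjk⟩ : Fin k) ≠ 0 := by
    intro h
    have := congrArg Fin.val h
    simp at this
    omega
  have hcosj : Real.cos (2 * Real.pi * j / k) < 1 := by
    have := hcos ⟨j, hjk⟩ hjne
    rwa [hjfin] at this
  have h00 : (2 : ℝ) * Real.cos (2 * Real.pi * ((0 : Fin k) : ℕ) / k) = 2 := by
    norm_num
  have hq0eval : ∀ μ : ℝ, (q 0).eval μ = μ ^ 2 - 2 * μ - 1 := by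
    intro μ
    rw [heval]
    rw [h00]
  have hp0eval : ∀ μ : ℝ, p₀.eval μ = μ ^ 2 - 2 * μ - 1 := by
    intro μ; rw [hp₀]; simp
  -- Part 1 : the resultant determinant
  have hdet4 : (!![1, -2, -1, 0; 0, 1, -2, -1; 1, -c, -1, 0; 0, 1, -c, -1] :
      Matrix (Fin 4) (Fin 4) ℝ).det = -(c - 2) ^ 2 := by
    rw [Matrix.det_succ_row_zero]
    simp [Fin.sum_univ_succ, Matrix.det_fin_three, Fin.succAbove]
    ring
  have hpart1 : (!![1, -2, -1, 0; 0, 1, -2, -1; 1, -c, -1, 0; 0, 1, -c, -1] :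
      Matrix (Fin 4) (Fin 4) ℝ).det = -4 * (1 - Real.cos (2 * Real.pi * j / k)) ^ 2 := by
    rw [hdet4, hc]; ring
  -- Part 2
  have hpart2 : -4 * (1 - Real.cos (2 * Real.pi * j / k)) ^ 2 < 0 := by
    have h1 : 0 < (1 - Real.cos (2 * Real.pi * j / k)) ^ 2 :=
      pow_pos (by linarith) 2
    linarith
  -- Part 3 : no common root
  have hpart3 : ∀ t : ℝ, ¬(p₀.eval t = 0 ∧ pj.eval t = 0) := by
    rintro t ⟨h0, hj'⟩
    have ht' : t ^ 2 - 2 * t - 1 = 0 := by rw [hp0eval] at h0; exact h0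
    have htj : t ^ 2 - c * t - 1 = 0 := by rw [hpj] at hj'; simpa using hj'
    have ht0 : t ≠ 0 := by intro h; rw [h] at ht'; norm_num at ht'
    have hkey : (2 - c) * t = 0 := by linear_combination htj - ht'
    rcases mul_eq_zero.mp hkey with h | h
    · rw [hc] at h; linarith
    · exact ht0 h
  -- Part 4 : roots of p₀ are simple eigenvalues
  have hpart4 : ∀ t : ℝ, p₀.eval t = 0 → A.charpoly.roots.count t = 1 := by
    intro t ht
    have ht' : t ^ 2 - 2 * t - 1 = 0 := by rw [hp0eval] at ht; exact ht
    have ht0 : t ≠ 0 := by intro h; rw [h] at ht'; norm_num at ht'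
    rw [hcountA, Finset.sum_congr rfl (fun i _ => hcount i t)]
    rw [Finset.sum_eq_single_of_mem (0 : Fin k) (Finset.mem_univ _)]
    · rw [if_pos (by rw [hq0eval]; exact ht')]
    · intro i _ hi
      rw [if_neg]
      rw [heval]
      intro hcon
      have hcc := hcos i hi
      have hkey : (2 - 2 * Real.cos (2 * Real.pi * i / k)) * t = 0 := by
        linear_combination hcon - ht'
      rcases mul_eq_zero.mp hkey with h | h
      · linarith
      · exact ht0 h
  -- the pairing i ↔ -i
  have hqpair : ∀ i : Fin k, q (-i) = q i := by
    intro i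
    by_cases hi : i = 0
    · subst hi; simp
    · have hi0 : 0 < (i : ℕ) := by
        rcases Nat.eq_zero_or_pos (i : ℕ) with h | h
        · exact absurd (Fin.ext h) hi
        · exact h
      have hvalneg : ((-i : Fin k) : ℕ) = k - (i : ℕ) := by
        rw [Fin.neg_def]
        simp only []
        exact Nat.mod_eq_of_lt (by omega)
      have hcoseq : Real.cos (2 * Real.pi * ((-i : Fin k) : ℕ) / k)
          = Real.cos (2 * Real.pi * (i : ℕ) / k) := by
        rw [hvalneg]
        have hcast : ((k - (i : ℕ) : ℕ) : ℝ) = (k : ℝ) - ((i : ℕ) : ℝ) := by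
          push_cast [Nat.cast_sub (le_of_lt i.isLt)]
          ring
        have hkne : (k : ℝ) ≠ 0 := by positivity
        have harg : 2 * Real.pi * ((k - (i : ℕ) : ℕ) : ℝ) / k
            = 2 * Real.pi - 2 * Real.pi * (i : ℕ) / k := by
          rw [hcast]; field_simp
        rw [harg, Real.cos_two_pi_sub]
      rw [hq]
      simp only []
      rw [hcoseq]
  have hne_neg : ∀ i : Fin k, i ≠ 0 → -i ≠ i := by
    intro i hi h
    have h2 : ((i : ℕ) + (i : ℕ)) % k = 0 := by
      have hadd : i + i = 0 := by nth_rewrite 1 [← h]; exact neg_add_cancel i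
      have := congrArg Fin.val hadd
      rw [Fin.val_add] at this
      simpa using this
    have hi0 : 0 < (i : ℕ) := by
      rcases Nat.eq_zero_or_pos (i : ℕ) with h' | h'
      · exact absurd (Fin.ext h') hi
      · exact h'
    obtain ⟨d, hd⟩ := Nat.dvd_of_mod_eq_zero h2
    obtain ⟨m, hm⟩ := hkodd
    have hik := i.isLt
    rcases Nat.lt_or_ge d 2 with h' | h'
    · interval_cases d <;> omega
    · have : k * 2 ≤ k * d := Nat.mul_le_mul_left k h'
      omega
  -- count = 1 → root of q 0
  have hforward : ∀ μ : ℝ, A.charpoly.roots.count μ = 1 → (q 0).eval μ = 0 := by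
    intro μ hμ
    by_contra h0
    rw [hcountA, Finset.sum_congr rfl (fun i _ => hcount i μ)] at hμ
    have hex : ∃ i : Fin k, (q i).eval μ = 0 := by
      by_contra hno
      push_neg at hno
      rw [Finset.sum_eq_zero (fun i _ => by rw [if_neg (hno i)])] at hμ
      omega
    obtain ⟨i, hi⟩ := hex
    have hine : i ≠ 0 := by rintro rfl; exact h0 hi
    have hneg : (q (-i)).eval μ = 0 := by rw [hqpair]; exact hi
    have hle : ∑ x ∈ ({i, -i} : Finset (Fin k)), (if (q x).eval μ = 0 then 1 else 0)
        ≤ ∑ x : Fin k, (if (q x).eval μ = 0 then 1 else 0) :=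
      Finset.sum_le_sum_of_subset (Finset.subset_univ _)
    rw [Finset.sum_pair (fun h => hne_neg i hine h.symm)] at hle
    rw [if_pos hi, if_pos hneg] at hle
    omega
  -- roots of q 0
  have hs2 : Real.sqrt 2 ^ 2 = 2 := Real.sq_sqrt (by norm_num)
  have hs2pos : 0 < Real.sqrt 2 := Real.sqrt_pos.mpr (by norm_num)
  have hfact : ∀ μ : ℝ, (q 0).eval μ = 0 ↔
      μ = 1 + Real.sqrt 2 ∨ μ = 1 - Real.sqrt 2 := by
    intro μ
    rw [hq0eval]
    constructor
    · intro h
      have hexp : (μ - (1 + Real.sqrt 2)) * (μ - (1 - Real.sqrt 2)) = 0 := by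
        linear_combination h - hs2
      rcases mul_eq_zero.mp hexp with h' | h'
      · exact Or.inl (by linarith [sub_eq_zero.mp h'])
      · exact Or.inr (by linarith [sub_eq_zero.mp h'])
    · rintro (rfl | rfl) <;> linear_combination hs2
  have hcpne : A.charpoly ≠ 0 := by rw [hcp]; exact hprodne
  have hfilter : A.charpoly.roots.toFinset.filter
      (fun μ => A.charpoly.roots.count μ = 1)
      = ({1 + Real.sqrt 2, 1 - Real.sqrt 2} : Finset ℝ) := by
    ext μ
    simp only [Finset.mem_filter, Multiset.mem_toFinset, Finset.mem_insert,
      Finset.mem_singleton]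
    constructor
    · rintro ⟨_, hcnt⟩
      exact (hfact μ).mp (hforward μ hcnt)
    · intro hor
      have h0 : (q 0).eval μ = 0 := (hfact μ).mpr hor
      have hp0 : p₀.eval μ = 0 := by rw [hp0eval, ← hq0eval]; exact h0
      have hcnt := hpart4 μ hp0
      refine ⟨?_, hcnt⟩
      rw [← Multiset.count_pos, hcnt]
      norm_num
  have hpart5 : (A.charpoly.roots.toFinset.filter
      (fun μ => A.charpoly.roots.count μ = 1)).card = 2 := by
    rw [hfilter]
    rw [Finset.card_insert_of_notMem (by simp; intro h; linarith)]
    simp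
  exact ⟨hpart1, hpart2, hpart3, hpart4, hpart5⟩
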